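/- If T : X → X is nonexpansive and weakly contractive with some constant l ∈ (0, 2), then T has exactly one fixed point: there exists a unique x ∈ X with Tx = x. -/

import Mathlib

open RealInnerProductSpace Filter

variable {X : Type*} [NormedAddCommGroup X] [InnerProductSpace ℝ X] [CompleteSpace X]

/-- `T` is nonexpansive. -/
def Nonexpansive (T : X → X) : Prop := ∀ x y : X, ‖T x - T y‖ ≤ ‖x - y‖

/-- `T` is firmly nonexpansive. -/
def FirmlyNonexpansive (T : X → X) : Prop :=
  ∀ x y : X, ‖T x - T y‖ ^ 2 ≤ ⟪x - y, T x - T y⟫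

/-- `‖T₁ - T₂‖ₙ = sup_{‖x‖ ≤ n} ‖T₁ x - T₂ x‖`. -/
noncomputable def ballSup (T₁ T₂ : X → X) (n : ℕ) : ℝ :=
  sSup {r : ℝ | ∃ x : X, ‖x‖ ≤ (n : ℝ) ∧ r = ‖T₁ x - T₂ x‖}

/-- The metric `ρ` on nonexpansive maps. -/
noncomputable def rho (T₁ T₂ : X → X) : ℝ :=
  ∑' n : ℕ, (1 / 2 ^ (n + 1)) *
    (ballSup T₁ T₂ (n + 1) / (1 + ballSup T₁ T₂ (n + 1)))

/-- The metric `ρ̂` on firmly nonexpansive maps: `ρ̂(T₁,T₂) = ρ(2T₁ - Id, 2T₂ - Id)`. -/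
noncomputable def rhoHat (T₁ T₂ : X → X) : ℝ :=
  rho (fun x => (2 : ℝ) • T₁ x - x) (fun x => (2 : ℝ) • T₂ x - x)

/-- `T` is super-regular with limit point `xT`. -/
def SuperRegularAt (T : X → X) (xT : X) : Prop :=
  ∀ s : ℝ, 0 < s → ∀ ε : ℝ, 0 < ε → ∃ N : ℕ, ∀ n ≥ N, ∀ x : X, ‖x‖ ≤ s → ‖T^[n] x - xT‖ < ε

/-- `T` is super-regular. -/
def SuperRegular (T : X → X) : Prop := ∃ xT : X, SuperRegularAt T xT

/-- `T` is a (Banach) contraction. -/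
def Contraction (T : X → X) : Prop :=
  ∃ l : ℝ, 0 ≤ l ∧ l < 1 ∧ ∀ x y : X, ‖T x - T y‖ ≤ l * ‖x - y‖

/-- a weakly contractive nonexpansive map has exactly one fixed point. -/
theorem weaklyContractive_unique_fixedPoint (T : X → X) (hT : Nonexpansive T)
    (l : ℝ) (hl0 : 0 < l) (hl2 : l < 2)
    (hw : ∀ x y : X, ‖T x - T y‖ ^ 2 ≤
      ‖x - y‖ ^ 2 - l * (‖x - y‖ ^ 2 + ⟪x - y, T x - T y⟫)) :
    ∃! x : X, T x = x := by
  -- The averaged map `S = (I + T)/2` is a Banach contraction with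
  -- constant `k = max (1/2) ((2 - l)/2) < 1`.
  set k : ℝ := max (1/2) ((2 - l)/2) with hk
  have hk0 : (0 : ℝ) ≤ k := le_trans (by norm_num) (le_max_left _ _)
  have hk1 : k < 1 := by
    rw [hk]; apply max_lt <;> [norm_num; linarith]
  set S : X → X := fun x => (2⁻¹ : ℝ) • (x + T x) with hSdef
  have hlip : ∀ x y : X, ‖S x - S y‖ ≤ k * ‖x - y‖ := by
    intro x y
    have hw' := hw x y
    have hba : ‖T x - T y‖ ≤ ‖x - y‖ := hT x y
    set u := x - y with hu
    set v := T x - T y with hv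
    have hSxy : S x - S y = (2⁻¹ : ℝ) • (u + v) := by
      simp only [hSdef, hu, hv, smul_add, smul_sub, ← smul_sub]
      module
    rw [hSxy, norm_smul]
    have hn : ‖(2⁻¹ : ℝ)‖ = 2⁻¹ := by norm_num
    rw [hn]
    have hexp : ‖u + v‖ ^ 2 = ‖u‖ ^ 2 + 2 * ⟪u, v⟫ + ‖v‖ ^ 2 := norm_add_sq_real u v
    have ht : ‖u + v‖ ≤ ‖u‖ + ‖v‖ := norm_add_le _ _
    have ha0 : (0 : ℝ) ≤ ‖u‖ := norm_nonneg _
    have hb0 : (0 : ℝ) ≤ ‖v‖ := norm_nonneg _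
    have hc0 : (0 : ℝ) ≤ ‖u + v‖ := norm_nonneg _
    rcases le_or_gt ‖u + v‖ ‖u‖ with h | h
    · have hkh : (1 : ℝ)/2 ≤ k := le_max_left _ _
      calc 2⁻¹ * ‖u + v‖ ≤ 2⁻¹ * ‖u‖ := by linarith
        _ ≤ k * ‖u‖ := by nlinarith
    · have ht0 : (0 : ℝ) < ‖u + v‖ := lt_of_le_of_lt ha0 h
      have hl2' : (0 : ℝ) ≤ 2 - l := by linarith
      have h1 : (2 - l) * ‖v‖ ^ 2 ≤ (2 - l) * ‖u‖ ^ 2 - l * ‖u + v‖ ^ 2 := by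
        nlinarith [hw', hexp]
      have hsq : (‖u + v‖ - ‖u‖) ^ 2 ≤ ‖v‖ ^ 2 := by nlinarith
      have h2 : (2 - l) * (‖u + v‖ - ‖u‖) ^ 2 ≤ (2 - l) * ‖v‖ ^ 2 :=
        mul_le_mul_of_nonneg_left hsq hl2'
      have key : ‖u + v‖ ≤ (2 - l) * ‖u‖ := by nlinarith [h1, h2, ht0]
      have hkh : (2 - l)/2 ≤ k := le_max_right _ _
      calc 2⁻¹ * ‖u + v‖ ≤ 2⁻¹ * ((2 - l) * ‖u‖) := by linarith
        _ = (2 - l)/2 * ‖u‖ := by ring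
        _ ≤ k * ‖u‖ := mul_le_mul_of_nonneg_right hkh ha0
  haveI : Nonempty X := ⟨0⟩
  have hC : ContractingWith ⟨k, hk0⟩ S := by
    constructor
    · exact_mod_cast hk1
    · exact LipschitzWith.of_dist_le_mul (fun x y => by rw [dist_eq_norm, dist_eq_norm]; exact hlip x y)
  obtain ⟨z, hfix⟩ : ∃ z, S z = z :=
    ⟨ContractingWith.fixedPoint S hC, ContractingWith.fixedPoint_isFixedPt hC⟩
  have hTz : T z = z := by
    have h2 : (2 : ℝ) • S z = (2 : ℝ) • z := by rw [hfix]
    have : z + T z = (2 : ℝ) • z := by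
      rw [hSdef] at h2
      simpa [smul_smul] using h2
    have h3 : T z = (2 : ℝ) • z - z := by rw [← this]; abel
    rw [h3, two_smul]; abel
  clear hC hlip hfix hk1 hk0
  clear_value S k
  clear hSdef hk
  refine ⟨z, hTz, ?_⟩
  intro y hy
  have h := hw y z
  rw [hy, hTz] at h
  have hi : ⟪y - z, y - z⟫ = ‖y - z‖ ^ 2 := real_inner_self_eq_norm_sq _
  rw [hi] at h
  have h2 : l * (‖y - z‖ ^ 2 + ‖y - z‖ ^ 2) ≤ l * 0 := by rw [mul_zero]; linarith
  have h3 : ‖y - z‖ ^ 2 + ‖y - z‖ ^ 2 ≤ 0 := le_of_mul_le_mul_left h2 hl0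
  have h4 : ‖y - z‖ ^ 2 = 0 := le_antisymm (by linarith [sq_nonneg ‖y - z‖]) (sq_nonneg _)
  have hn : ‖y - z‖ = 0 := by
    have := pow_eq_zero_iff (n := 2) (by norm_num) |>.mp h4
    exact this
  exact sub_eq_zero.mp (norm_eq_zero.mp hn)
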